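/- The tensor families produced by the abstract topological recursion from the Eynard–Orantin tensors and from the modified (residue-constraint) tensors of the Airy curve coincide: S^{TR}_{g,n; i₁,…,i_n} = S_{g,n; i₁,…,i_n} for all admissible (g,n) and all positive-integer indices i₁, …, i_n. -/

import Mathlib

namespace Airy

/-- The tensor `A` of the Airy curve: `a_{111} = 1/4`, all other components `0`. -/
noncomputable def aT (i j l : ℕ+) : ℂ := if i = 1 ∧ j = 1 ∧ l = 1 then 1/4 else 0

/-- The tensor `ε` of the Airy curve: `ε₃ = 1/16`, all other components `0`. -/
noncomputable def epsT (i : ℕ+) : ℂ := if i = 3 then 1/16 else 0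

/-- The Eynard–Orantin `B`-tensor of the Airy curve. -/
noncomputable def bTR (i j l : ℕ+) : ℂ :=
  if Odd (i : ℕ) ∧ (i : ℕ) + (j : ℕ) = (l : ℕ) + 3 then
    (1/4) * (-1 : ℂ) ^ ((j : ℕ) + 1) * (j : ℕ) else 0

/-- The Eynard–Orantin `C`-tensor of the Airy curve. -/
noncomputable def cTR (i j l : ℕ+) : ℂ :=
  if Even ((j : ℕ) + (l : ℕ)) ∧ (i : ℕ) = (j : ℕ) + (l : ℕ) + 3 then
    (1/4) * (-1 : ℂ) ^ ((l : ℕ) + 1) else 0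

/-- The modified (residue-constraint) `B`-tensor of the Airy curve. -/
noncomputable def bM (i j l : ℕ+) : ℂ :=
  if Odd (i : ℕ) ∧ (i : ℕ) + (j : ℕ) = (l : ℕ) + 3 then (1/4) * (j : ℕ) else 0

/-- The modified (residue-constraint) `C`-tensor of the Airy curve. -/
noncomputable def cM (i j l : ℕ+) : ℂ :=
  if Even ((j : ℕ) + (l : ℕ)) ∧ (i : ℕ) = (j : ℕ) + (l : ℕ) + 3 then 1/4 else 0

/-- `S_{g',n'}` with the convention that it is interpreted as `0` when `n' = 0` or
(`g' = 0` and `n' ≤ 2`). -/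
noncomputable def SE (S : ℕ → List ℕ+ → ℂ) (g : ℕ) (l : List ℕ+) : ℂ :=
  if l.length = 0 ∨ (g = 0 ∧ l.length ≤ 2) then 0 else S g l

/-- The subsequence of a list indexed by a set `J` of positions. -/
def subseq {α : Type*} (l : List α) (J : Finset (Fin l.length)) : List α :=
  ((List.finRange l.length).filter (fun p => p ∈ J)).map l.get

/-- `S` is defined by the abstract topological recursion from the tensors `(aT, b, c, epsT)`. -/
def Recur (b c : ℕ+ → ℕ+ → ℕ+ → ℂ) (S : ℕ → List ℕ+ → ℂ) : Prop :=
  (∀ i j l : ℕ+, S 0 [i, j, l] = 2 * aT i j l) ∧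
  (∀ i : ℕ+, S 1 [i] = epsT i) ∧
  (∀ g n : ℕ, ((g = 0 ∧ 4 ≤ n) ∨ (g = 1 ∧ 2 ≤ n) ∨ (2 ≤ g ∧ 1 ≤ n)) →
    ∀ (i : ℕ+) (t : List ℕ+), t.length = n - 1 →
      S g (i :: t)
        = 2 * (∑ α : Fin t.length, ∑ᶠ l : ℕ+,
            b i (t.get α) l * SE S g (l :: t.eraseIdx α))
        + (∑ g₁ ∈ Finset.range (g + 1), ∑ J : Finset (Fin t.length), ∑ᶠ j : ℕ+, ∑ᶠ l : ℕ+,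
            c i j l * SE S g₁ (j :: subseq t J) * SE S (g - g₁) (l :: subseq t Jᶜ))
        + (if g = 0 then 0 else
            ∑ᶠ j : ℕ+, ∑ᶠ l : ℕ+, c i j l * SE S (g - 1) (j :: l :: t)))

/-! ### Auxiliary lemmas -/

lemma subseq_length_add {α : Type*} (t : List α) (J : Finset (Fin t.length)) :
    (subseq t J).length + (subseq t Jᶜ).length = t.length := by
  unfold subseq
  simp only [List.length_map]
  have h2 : (List.finRange t.length).filter (fun p => p ∈ Jᶜ)
      = (List.finRange t.length).filter (fun p => !(decide (p ∈ J))) := by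
    apply List.filter_congr
    intro x _
    simp [Finset.mem_compl]
  rw [h2, ← List.length_eq_length_filter_add, List.length_finRange]

lemma get_mem_subseq {α : Type*} (t : List α) (J : Finset (Fin t.length)) (β : Fin t.length)
    (h : β ∈ J) : t.get β ∈ subseq t J :=
  List.mem_map.2 ⟨β, List.mem_filter.2 ⟨List.mem_finRange β, by simpa using h⟩, rfl⟩

lemma mem_subseq_or {α : Type*} (t : List α) (J : Finset (Fin t.length)) {x : α} (h : x ∈ t) :
    x ∈ subseq t J ∨ x ∈ subseq t Jᶜ := by
  obtain ⟨β, rfl⟩ := List.mem_iff_get.1 h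
  by_cases hβ : β ∈ J
  · exact Or.inl (get_mem_subseq _ _ _ hβ)
  · exact Or.inr (get_mem_subseq _ _ _ (Finset.mem_compl.2 hβ))

lemma mem_eraseIdx_of {α : Type*} (t : List α) (β : Fin t.length) {x : α}
    (hx : x ∈ t) (hne : x ≠ t.get β) : x ∈ t.eraseIdx β := by
  obtain ⟨γ, rfl⟩ := List.mem_iff_get.1 hx
  refine List.mem_eraseIdx_iff_getElem.2 ⟨γ, γ.isLt, ?_, rfl⟩
  intro hc
  exact hne (by simp [List.get_eq_getElem, ← hc])

lemma length_eraseIdx' {α : Type*} (t : List α) (β : Fin t.length) :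
    (t.eraseIdx β).length + 1 = t.length := by
  rw [List.length_eraseIdx]
  have := β.isLt
  split <;> omega

lemma Adm_of_not (g : ℕ) (l : List ℕ+) (h : ¬(l.length = 0 ∨ (g = 0 ∧ l.length ≤ 2))) :
    (g = 0 ∧ 3 ≤ l.length) ∨ (1 ≤ g ∧ 1 ≤ l.length) := by
  push_neg at h
  omega

lemma SE_zero (S : ℕ → List ℕ+ → ℂ) {g : ℕ} {l : List ℕ+}
    (h : l.length = 0 ∨ (g = 0 ∧ l.length ≤ 2)) : SE S g l = 0 := if_pos h

lemma SE_congr {S S' : ℕ → List ℕ+ → ℂ} {g : ℕ} {l : List ℕ+}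
    (h : ((g = 0 ∧ 3 ≤ l.length) ∨ (1 ≤ g ∧ 1 ≤ l.length)) → S' g l = S g l) :
    SE S' g l = SE S g l := by
  unfold SE
  split
  · rfl
  · next hc => exact h (Adm_of_not _ _ hc)

lemma bTR_eq {j : ℕ+} (i l : ℕ+) (h : Odd (j : ℕ)) : bTR i j l = bM i j l := by
  rw [bTR, bM]
  split
  · rw [Even.neg_one_pow h.add_one, mul_one]
  · rfl

lemma cTR_eq {l : ℕ+} (i j : ℕ+) (h : Odd (l : ℕ)) : cTR i j l = cM i j l := by
  rw [cTR, cM]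
  split
  · rw [Even.neg_one_pow h.add_one, mul_one]
  · rfl

/-- The key vanishing lemma: the modified tensors produce correlators supported on
all-odd index tuples. -/
lemma vanish (S : ℕ → List ℕ+ → ℂ) (hS : Recur bM cM S) (m : ℕ) :
    ∀ (g : ℕ) (l : List ℕ+), 2 * g + l.length ≤ m →
      ((g = 0 ∧ 3 ≤ l.length) ∨ (1 ≤ g ∧ 1 ≤ l.length)) →
      (∃ x ∈ l, Even (x : ℕ)) → S g l = 0 := by
  induction m using Nat.strong_induction_on with
  | _ m IH =>
  intro g l hm hadm hx
  have SEv : ∀ (g' : ℕ) (l' : List ℕ+), 2 * g' + l'.length < m →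
      (∃ x ∈ l', Even (x : ℕ)) → SE S g' l' = 0 := by
    intro g' l' hlt hx'
    unfold SE
    split
    · rfl
    · next hc => exact IH _ hlt g' l' le_rfl (Adm_of_not _ _ hc) hx'
  by_cases h03 : g = 0 ∧ l.length = 3
  · obtain ⟨a, b, c, rfl⟩ := List.length_eq_three.1 h03.2
    rw [h03.1, hS.1]
    have hne : ¬(a = 1 ∧ b = 1 ∧ c = 1) := by
      rintro ⟨rfl, rfl, rfl⟩
      obtain ⟨x, hx1, hx2⟩ := hx
      have : x = 1 := by simpa using hx1
      rw [this] at hx2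
      exact (by decide : ¬ Even (((1 : ℕ+) : ℕ))) hx2
    rw [aT, if_neg hne, mul_zero]
  by_cases h11 : g = 1 ∧ l.length = 1
  · obtain ⟨a, rfl⟩ := List.length_eq_one_iff.1 h11.2
    rw [h11.1, hS.2.1]
    obtain ⟨x, hx1, hx2⟩ := hx
    have hxa : x = a := by simpa using hx1
    subst hxa
    have : x ≠ 3 := by
      rintro rfl
      exact (by decide : ¬ Even (((3 : ℕ+) : ℕ))) hx2
    rw [epsT, if_neg this]
  obtain ⟨i, t, rfl⟩ : ∃ i t, l = i :: t := by
    cases l with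
    | nil => simp at hadm
    | cons a t => exact ⟨a, t, rfl⟩
  have hlc : (i :: t).length = t.length + 1 := List.length_cons
  have hcond : (g = 0 ∧ 4 ≤ (i :: t).length) ∨ (g = 1 ∧ 2 ≤ (i :: t).length)
      ∨ (2 ≤ g ∧ 1 ≤ (i :: t).length) := by
    simp only [List.length_cons] at h03 h11 hadm ⊢
    omega
  rw [hS.2.2 g (i :: t).length hcond i t (by simp)]
  simp only [List.length_cons] at hm
  obtain ⟨x, hx1, hx2⟩ := hx
  have hA : (∑ α : Fin t.length, ∑ᶠ l' : ℕ+,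
      bM i (t.get α) l' * SE S g (l' :: t.eraseIdx ↑α)) = 0 := by
    apply Finset.sum_eq_zero
    intro α _
    apply finsum_eq_zero_of_forall_eq_zero
    intro l'
    rw [bM]
    split
    · next hco =>
      obtain ⟨hoi, hsum⟩ := hco
      have hxi : x ≠ i := by
        rintro rfl
        rw [Nat.odd_iff] at hoi
        rw [Nat.even_iff] at hx2
        omega
      have hxt : x ∈ t := by
        rcases List.mem_cons.1 hx1 with h | h
        · exact absurd h hxi
        · exact h
      have hlen : (l' :: t.eraseIdx ↑α).length = t.length := by
        simp only [List.length_cons]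
        exact length_eraseIdx' t α
      by_cases hj : Even ((t.get α : ℕ))
      · have hl' : Even ((l' : ℕ)) := by
          rw [Nat.even_iff] at hj ⊢
          rw [Nat.odd_iff] at hoi
          omega
        rw [SEv g _ (by rw [hlen]; omega) ⟨l', List.mem_cons_self, hl'⟩, mul_zero]
      · have hxj : x ≠ t.get α := by
          rintro rfl
          exact hj hx2
        rw [SEv g _ (by rw [hlen]; omega)
          ⟨x, List.mem_cons_of_mem _ (mem_eraseIdx_of t α hxt hxj), hx2⟩, mul_zero]
    · exact zero_mul _
  have hB : (∑ g₁ ∈ Finset.range (g + 1), ∑ J : Finset (Fin t.length), ∑ᶠ j : ℕ+, ∑ᶠ l' : ℕ+,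
      cM i j l' * SE S g₁ (j :: subseq t J) * SE S (g - g₁) (l' :: subseq t Jᶜ)) = 0 := by
    apply Finset.sum_eq_zero
    intro g₁ hg₁
    apply Finset.sum_eq_zero
    intro J _
    apply finsum_eq_zero_of_forall_eq_zero
    intro j
    apply finsum_eq_zero_of_forall_eq_zero
    intro l'
    rw [cM]
    split
    · next hco =>
      have hoi : Odd (i : ℕ) := by
        rw [Nat.odd_iff]
        have h1 := Nat.even_iff.1 hco.1
        omega
      have hxi : x ≠ i := by
        rintro rfl
        rw [Nat.odd_iff] at hoi
        rw [Nat.even_iff] at hx2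
        omega
      have hxt : x ∈ t := by
        rcases List.mem_cons.1 hx1 with h | h
        · exact absurd h hxi
        · exact h
      have hg₁le : g₁ ≤ g := Nat.lt_succ_iff.1 (Finset.mem_range.1 hg₁)
      have hlen := subseq_length_add t J
      rcases mem_subseq_or t J hxt with hmem | hmem
      · by_cases hz : 2 * (g - g₁) + (subseq t Jᶜ).length = 0
        · rw [SE_zero S (l := l' :: subseq t Jᶜ)
            (Or.inr ⟨by omega, by simp only [List.length_cons]; omega⟩), mul_zero]
        · rw [SEv g₁ (j :: subseq t J) (by simp only [List.length_cons]; omega)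
            ⟨x, List.mem_cons_of_mem _ hmem, hx2⟩]
          rw [mul_zero, zero_mul]
      · by_cases hz : 2 * g₁ + (subseq t J).length = 0
        · rw [SE_zero S (l := j :: subseq t J)
            (Or.inr ⟨by omega, by simp only [List.length_cons]; omega⟩)]
          rw [mul_zero, zero_mul]
        · rw [SEv (g - g₁) (l' :: subseq t Jᶜ) (by simp only [List.length_cons]; omega)
            ⟨x, List.mem_cons_of_mem _ hmem, hx2⟩, mul_zero]
    · rw [zero_mul, zero_mul]
  have hC : (if g = 0 then (0:ℂ) else
      ∑ᶠ j : ℕ+, ∑ᶠ l' : ℕ+, cM i j l' * SE S (g - 1) (j :: l' :: t)) = 0 := by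
    split
    · rfl
    · next hg0 =>
      apply finsum_eq_zero_of_forall_eq_zero
      intro j
      apply finsum_eq_zero_of_forall_eq_zero
      intro l'
      rw [cM]
      split
      · next hco =>
        have hoi : Odd (i : ℕ) := by
          rw [Nat.odd_iff]
          have h1 := Nat.even_iff.1 hco.1
          omega
        have hxi : x ≠ i := by
          rintro rfl
          rw [Nat.odd_iff] at hoi
          rw [Nat.even_iff] at hx2
          omega
        have hxt : x ∈ t := by
          rcases List.mem_cons.1 hx1 with h | h
          · exact absurd h hxi
          · exact h
        rw [SEv (g - 1) (j :: l' :: t) (by simp only [List.length_cons]; omega)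
          ⟨x, by simp [hxt], hx2⟩, mul_zero]
      · exact zero_mul _
  rw [hA, hB, hC, mul_zero, add_zero, add_zero]

lemma SEvanish (S : ℕ → List ℕ+ → ℂ) (hS : Recur bM cM S) (g : ℕ) (l : List ℕ+)
    (hx : ∃ x ∈ l, Even (x : ℕ)) : SE S g l = 0 := by
  unfold SE
  split
  · rfl
  · next hc => exact vanish S hS (2 * g + l.length) g l le_rfl (Adm_of_not _ _ hc) hx

/-- the abstract topological recursion produces the same tensors from the
Eynard–Orantin tensors `(bTR, cTR)` and from the modified residue-constraint tensors
`(bM, cM)` of the Airy curve. -/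
theorem tr_eq_modified_tr (S STR : ℕ → List ℕ+ → ℂ)
    (hM : Recur bM cM S) (hTR : Recur bTR cTR STR) :
    ∀ (g : ℕ) (l : List ℕ+),
      ((g = 0 ∧ 3 ≤ l.length) ∨ (1 ≤ g ∧ 1 ≤ l.length)) → STR g l = S g l := by
  suffices h : ∀ (m g : ℕ) (l : List ℕ+), 2 * g + l.length ≤ m →
      ((g = 0 ∧ 3 ≤ l.length) ∨ (1 ≤ g ∧ 1 ≤ l.length)) → STR g l = S g l by
    intro g l hadm
    exact h (2 * g + l.length) g l le_rfl hadm
  intro m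
  induction m using Nat.strong_induction_on with
  | _ m IH =>
  intro g l hm hadm
  have SEeq : ∀ (g' : ℕ) (l' : List ℕ+), 2 * g' + l'.length < m →
      SE STR g' l' = SE S g' l' := by
    intro g' l' hlt
    apply SE_congr
    intro hadm'
    exact IH _ hlt g' l' le_rfl hadm'
  by_cases h03 : g = 0 ∧ l.length = 3
  · obtain ⟨a, b, c, rfl⟩ := List.length_eq_three.1 h03.2
    rw [h03.1, hM.1, hTR.1]
  by_cases h11 : g = 1 ∧ l.length = 1
  · obtain ⟨a, rfl⟩ := List.length_eq_one_iff.1 h11.2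
    rw [h11.1, hM.2.1, hTR.2.1]
  obtain ⟨i, t, rfl⟩ : ∃ i t, l = i :: t := by
    cases l with
    | nil => simp at hadm
    | cons a t => exact ⟨a, t, rfl⟩
  have hlc : (i :: t).length = t.length + 1 := List.length_cons
  have hcond : (g = 0 ∧ 4 ≤ (i :: t).length) ∨ (g = 1 ∧ 2 ≤ (i :: t).length)
      ∨ (2 ≤ g ∧ 1 ≤ (i :: t).length) := by
    simp only [List.length_cons] at h03 h11 hadm ⊢
    omega
  rw [hM.2.2 g (i :: t).length hcond i t (by simp),
      hTR.2.2 g (i :: t).length hcond i t (by simp)]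
  simp only [List.length_cons] at hm
  congr 1
  congr 1
  · -- B-part
    congr 1
    apply Finset.sum_congr rfl
    intro α _
    apply finsum_congr
    intro l'
    have hlen : (l' :: t.eraseIdx ↑α).length = t.length := by
      simp only [List.length_cons]
      exact length_eraseIdx' t α
    rw [SEeq g (l' :: t.eraseIdx ↑α) (by rw [hlen]; omega)]
    by_cases hP : Odd (i : ℕ) ∧ (i : ℕ) + ((t.get α : ℕ)) = (l' : ℕ) + 3
    · by_cases hj : Odd ((t.get α : ℕ))
      · rw [bTR_eq i l' hj]
      · have hl' : Even ((l' : ℕ)) := by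
          rw [Nat.not_odd_iff_even, Nat.even_iff] at hj
          rw [Nat.even_iff]
          have := Nat.odd_iff.1 hP.1
          omega
        rw [SEvanish S hM g _ ⟨l', List.mem_cons_self, hl'⟩, mul_zero, mul_zero]
    · rw [bTR, bM, if_neg hP, if_neg hP]
  · -- C-part (stable)
    apply Finset.sum_congr rfl
    intro g₁ hg₁
    apply Finset.sum_congr rfl
    intro J _
    apply finsum_congr
    intro j
    apply finsum_congr
    intro l'
    have hg₁le : g₁ ≤ g := Nat.lt_succ_iff.1 (Finset.mem_range.1 hg₁)
    have hlen := subseq_length_add t J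
    by_cases hz1 : (j :: subseq t J).length = 0 ∨ (g₁ = 0 ∧ (j :: subseq t J).length ≤ 2)
    · rw [SE_zero STR hz1, SE_zero S hz1, mul_zero, zero_mul, mul_zero, zero_mul]
    by_cases hz2 : (l' :: subseq t Jᶜ).length = 0
        ∨ (g - g₁ = 0 ∧ (l' :: subseq t Jᶜ).length ≤ 2)
    · rw [SE_zero STR hz2, SE_zero S hz2, mul_zero, mul_zero]
    simp only [List.length_cons] at hz1 hz2
    push_neg at hz1 hz2
    have hb1 : 2 ≤ 2 * g₁ + (subseq t J).length + 1 := by omega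
    have hb2 : 2 ≤ 2 * (g - g₁) + (subseq t Jᶜ).length + 1 := by omega
    rw [SEeq g₁ (j :: subseq t J) (by simp only [List.length_cons]; omega),
        SEeq (g - g₁) (l' :: subseq t Jᶜ) (by simp only [List.length_cons]; omega)]
    by_cases hl' : Odd ((l' : ℕ))
    · rw [cTR_eq i j hl']
    · by_cases hP : Even ((j : ℕ) + (l' : ℕ)) ∧ (i : ℕ) = (j : ℕ) + (l' : ℕ) + 3
      · have hje : Even ((j : ℕ)) := by
          rw [Nat.not_odd_iff_even, Nat.even_iff] at hl'
          rw [Nat.even_iff]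
          have := Nat.even_iff.1 hP.1
          omega
        rw [SEvanish S hM g₁ _ ⟨j, List.mem_cons_self, hje⟩,
            mul_zero, zero_mul, mul_zero, zero_mul]
      · rw [cTR, cM, if_neg hP, if_neg hP]
  · -- last part
    split
    · rfl
    · next hg0 =>
      apply finsum_congr
      intro j
      apply finsum_congr
      intro l'
      rw [SEeq (g - 1) (j :: l' :: t) (by simp only [List.length_cons]; omega)]
      by_cases hl' : Odd ((l' : ℕ))
      · rw [cTR_eq i j hl']
      · by_cases hP : Even ((j : ℕ) + (l' : ℕ)) ∧ (i : ℕ) = (j : ℕ) + (l' : ℕ) + 3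
        · have hje : Even ((j : ℕ)) := by
            rw [Nat.not_odd_iff_even, Nat.even_iff] at hl'
            rw [Nat.even_iff]
            have := Nat.even_iff.1 hP.1
            omega
          rw [SEvanish S hM (g - 1) _ ⟨j, List.mem_cons_self, hje⟩, mul_zero, mul_zero]
        · rw [cTR, cM, if_neg hP, if_neg hP]

end Airy
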